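/- Let D = {z ∈ ℂ : |z| < 1} and define T f(z) = ∫_D k(z,w) f(w) dA(w), where k(z,w) = (1 − |w|²)/(π (z − w)(1 − z·conj(w))). Then there exists an absolute constant C > 0 such that for every p with 2 < p < ∞ and every f ∈ L^p(D): the integral defining T f(z) converges absolutely for every z ∈ D and sup_{z ∈ D} |T f(z)| ≤ C · ((p−1)/(p−2)) · ‖f‖_{L^p(D)}; moreover for every f ∈ L^∞(D), sup_{z ∈ D} |T f(z)| ≤ C ‖f‖_{L^∞(D)}. -/

import Mathlib

open MeasureTheory Complex Metric Set ENNReal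

noncomputable section

/-- The unit disc `D ⊂ ℂ`. -/
def unitD : Set ℂ := Metric.ball (0 : ℂ) 1

/-- The kernel `k(z,w) = (1-|w|²)/(π (z-w)(1-z w̄))`, i.e. `∂G/∂z` for the Green's function
of `∂²/∂z∂z̄` on the unit disc. -/
def kD (z w : ℂ) : ℂ :=
  ((1 - ‖w‖ ^ 2 : ℝ) : ℂ) /
    ((Real.pi : ℂ) * (z - w) * (1 - z * (starRingEnd ℂ) w))

/-- The Bergman kernel `K(z,w) = 1/(π (1-z w̄)²)` of the unit disc. -/
def KD (z w : ℂ) : ℂ :=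
  1 / ((Real.pi : ℂ) * (1 - z * (starRingEnd ℂ) w) ^ 2)

/-- The Wirtinger derivative `∂φ/∂z̄ = ½(∂φ/∂x + i ∂φ/∂y)` of `φ : ℂ → ℂ`. -/
def wbar1 (φ : ℂ → ℂ) (z : ℂ) : ℂ :=
  (1 / 2 : ℂ) * (fderiv ℝ φ z 1 + Complex.I * fderiv ℝ φ z Complex.I)

/-- The Wirtinger derivative `∂φ/∂z = ½(∂φ/∂x − i ∂φ/∂y)` of `φ : ℂ → ℂ`. -/
def wz1 (φ : ℂ → ℂ) (z : ℂ) : ℂ :=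
  (1 / 2 : ℂ) * (fderiv ℝ φ z 1 - Complex.I * fderiv ℝ φ z Complex.I)

/-- The Wirtinger derivative `∂φ/∂z̄_j` of `φ : ℂⁿ → ℂ` in the `j`-th coordinate. -/
def wbar {n : ℕ} (φ : (Fin n → ℂ) → ℂ) (j : Fin n) (z : Fin n → ℂ) : ℂ :=
  (1 / 2 : ℂ) * (fderiv ℝ φ z (Pi.single j 1) + Complex.I * fderiv ℝ φ z (Pi.single j Complex.I))

/-- The product domain `Ωⁿ ⊆ ℂⁿ`. -/
def poly (n : ℕ) (Ω : Set ℂ) : Set (Fin n → ℂ) := Set.univ.pi fun _ => Ω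

lemma two_rpow_arith (n : ℕ) (t : ℝ) :
    ((2:ℝ)^n) ^ t * ((2 * ((2:ℝ)^n)⁻¹) ^ 2 * Real.pi) = 4 * Real.pi * ((2:ℝ)^(t-2)) ^ n := by
  induction n with
  | zero => norm_num [Real.one_rpow]
  | succ n ih =>
    have ha : (0:ℝ) < (2:ℝ)^n := by positivity
    have hmul : ((2:ℝ)^(n+1)) = 2 * (2:ℝ)^n := by ring
    have h4 : (2:ℝ) ^ (2:ℝ) = 4 := by
      rw [show (2:ℝ) = ((2:ℕ):ℝ) by norm_num, Real.rpow_natCast]; norm_num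
    have h2t : (2:ℝ) ^ t = (2:ℝ) ^ (t-2) * 4 := by
      have h := Real.rpow_add two_pos (t-2) 2
      rw [sub_add_cancel] at h
      rw [h, h4]
    rw [hmul, Real.mul_rpow (by norm_num) ha.le, pow_succ, h2t]
    linear_combination (2:ℝ)^(t-2) * ih

lemma aux_one_sub {x : ℝ} (h0 : 0 < x) (h1 : x ≤ 1) : x / 4 ≤ 1 - (2:ℝ) ^ (-x) := by
  have hlog : (0.6931471803 : ℝ) < Real.log 2 := Real.log_two_gt_d9
  have hlog1 : Real.log 2 < 1 := by
    have := Real.log_two_lt_d9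
    linarith
  set y := x * Real.log 2 with hy
  have hy0 : 0 < y := by positivity
  have hy1 : y ≤ 1 := by nlinarith
  have h2x : (2:ℝ) ^ (-x) = Real.exp (-y) := by
    rw [Real.rpow_def_of_pos two_pos]
    ring_nf
    rw [hy]; ring_nf
  rw [h2x]
  have hexp : Real.exp (-y) * (1 + y) ≤ 1 := by
    have h := Real.add_one_le_exp y
    have hpos : 0 < Real.exp (-y) := Real.exp_pos _
    have : Real.exp (-y) * (y + 1) ≤ Real.exp (-y) * Real.exp y := by nlinarith
    rw [← Real.exp_add] at this
    simpa [add_comm] using this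
  have hxy : x / 2 ≤ y := by nlinarith
  nlinarith [Real.exp_pos (-y)]

lemma kD_norm_le {z w : ℂ} (hz : z ∈ unitD) (hw : w ∈ unitD) :
    ‖kD z w‖ ≤ 2 / Real.pi * ‖z - w‖ ^ (-1 : ℝ) := by
  simp only [unitD, mem_ball, dist_zero_right] at hz hw
  rcases eq_or_ne w z with rfl | hne
  · simp [kD, Real.rpow_neg_one]
  have hπ : (0:ℝ) < Real.pi := Real.pi_pos
  have hzw : (0:ℝ) < ‖z - w‖ := by
    rw [norm_pos_iff]; exact sub_ne_zero.2 (Ne.symm hne)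
  have hd : (0:ℝ) < 1 - ‖z‖ * ‖w‖ := by nlinarith [norm_nonneg z, norm_nonneg w]
  have hden : 1 - ‖z‖ * ‖w‖ ≤ ‖(1:ℂ) - z * (starRingEnd ℂ) w‖ := by
    have h := norm_sub_norm_le (1:ℂ) (z * (starRingEnd ℂ) w)
    simpa [norm_mul] using h
  set B := ‖(1:ℂ) - z * (starRingEnd ℂ) w‖ with hB
  have hBpos : 0 < B := lt_of_lt_of_le hd hden
  have hnum0 : (0:ℝ) ≤ 1 - ‖w‖ ^ 2 := by
    have habs : ‖w‖ = ‖w‖ := rfl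
    nlinarith [norm_nonneg w]
  have hnum : 1 - ‖w‖ ^ 2 ≤ 2 * (1 - ‖z‖ * ‖w‖) := by
    have habs : ‖w‖ = ‖w‖ := rfl
    rw [habs]
    nlinarith [norm_nonneg w, norm_nonneg z, hz.le, hw.le]
  have hnorm : ‖kD z w‖ = (1 - ‖w‖ ^ 2) / (Real.pi * ‖z - w‖ * B) := by
    rw [kD, norm_div]
    congr 1
    · rw [Complex.norm_real, Real.norm_of_nonneg hnum0]
    · rw [norm_mul, norm_mul]
      congr 2
      rw [Complex.norm_real, Real.norm_of_nonneg Real.pi_nonneg]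
  rw [hnorm, Real.rpow_neg_one, div_le_iff₀ (by positivity)]
  have h2 : ‖z - w‖ ≠ 0 := hzw.ne'
  have hiden : 2 / Real.pi * ‖z - w‖⁻¹ * (Real.pi * ‖z - w‖ * B) = 2 * B := by
    field_simp
  rw [hiden]
  calc (1 - ‖w‖ ^ 2) ≤ 2 * (1 - ‖z‖ * ‖w‖) := hnum
    _ ≤ 2 * B := by linarith

lemma kD_measurable (z : ℂ) : Measurable (fun w => kD z w) := by
  unfold kD
  apply Measurable.div
  · exact Complex.measurable_ofReal.comp
      (measurable_const.sub ((continuous_norm.measurable).pow_const 2))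
  · exact (measurable_const.mul (measurable_const.sub measurable_id)).mul
      (measurable_const.sub (measurable_const.mul (Complex.continuous_conj.measurable)))

lemma key_lintegral {z : ℂ} (hz : z ∈ unitD) {t : ℝ} (ht1 : 1 ≤ t) (ht2 : t < 2) :
    ∫⁻ w in unitD, ENNReal.ofReal (‖z - w‖ ^ (-t)) ≤ ENNReal.ofReal (32 * Real.pi / (2 - t)) := by
  simp only [unitD, mem_ball, dist_zero_right] at hz
  set S : ℕ → Set ℂ := fun n =>
    {w : ℂ | ((2:ℝ)^n)⁻¹ < ‖z - w‖ ∧ ‖z - w‖ ≤ 2 * ((2:ℝ)^n)⁻¹} with hS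
  set r : ℝ := (2:ℝ) ^ (t - 2) with hr
  have hr0 : 0 < r := Real.rpow_pos_of_pos two_pos _
  have hr1 : r < 1 := Real.rpow_lt_one_of_one_lt_of_neg one_lt_two (by linarith)
  have hcover : unitD ⊆ {z} ∪ ⋃ n, S n := by
    intro w hw
    simp only [unitD, mem_ball, dist_zero_right] at hw
    rcases eq_or_ne w z with rfl | hne
    · exact Or.inl rfl
    refine Or.inr ?_
    have hd0 : 0 < ‖z - w‖ := by rw [norm_pos_iff]; exact sub_ne_zero.2 (Ne.symm hne)
    have hd2 : ‖z - w‖ < 2 := by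
      calc ‖z - w‖ ≤ ‖z‖ + ‖w‖ := norm_sub_le _ _
        _ < 2 := by linarith
    obtain ⟨m, hm⟩ := exists_pow_lt_of_lt_one hd0 (by norm_num : (1/2:ℝ) < 1)
    have hex : ∃ n : ℕ, ((2:ℝ)^n)⁻¹ < ‖z - w‖ := by
      refine ⟨m, ?_⟩
      have heq : ((1:ℝ)/2)^m = ((2:ℝ)^m)⁻¹ := by
        rw [one_div, inv_pow]
      linarith [heq ▸ hm]
    classical
    set n := Nat.find hex with hn
    have h1 : ((2:ℝ)^n)⁻¹ < ‖z - w‖ := Nat.find_spec hex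
    have h2 : ‖z - w‖ ≤ 2 * ((2:ℝ)^n)⁻¹ := by
      rcases Nat.eq_zero_or_pos n with h0 | hpos
      · rw [h0, pow_zero, inv_one]; linarith
      · have hlt := Nat.find_min hex (Nat.sub_lt hpos one_pos)
        rw [← hn] at hlt
        push_neg at hlt
        have hsub : n - 1 + 1 = n := Nat.succ_pred_eq_of_pos hpos
        have hpow2 : (2:ℝ)^n = 2 * (2:ℝ)^(n-1) := by
          conv_lhs => rw [← hsub]
          rw [pow_succ]; ring
        rw [hpow2, mul_inv]
        calc ‖z - w‖ ≤ ((2:ℝ)^(n-1))⁻¹ := hlt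
          _ = 2 * (2⁻¹ * ((2:ℝ)^(n-1))⁻¹) := by ring
    exact mem_iUnion.2 ⟨n, ⟨h1, h2⟩⟩
  have hann : ∀ n : ℕ, ∫⁻ w in S n, ENNReal.ofReal (‖z - w‖ ^ (-t))
      ≤ ENNReal.ofReal (4 * Real.pi) * ENNReal.ofReal r ^ n := by
    intro n
    have hpow : (0:ℝ) < (2:ℝ)^n := by positivity
    have hb : ∫⁻ w in S n, ENNReal.ofReal (‖z - w‖ ^ (-t))
        ≤ ∫⁻ _ in S n, ENNReal.ofReal (((2:ℝ)^n) ^ t) := by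
      refine setLIntegral_mono measurable_const ?_
      intro w hw
      refine ENNReal.ofReal_le_ofReal ?_
      have h1 : ((2:ℝ)^n)⁻¹ ≤ ‖z - w‖ := le_of_lt hw.1
      have hmono := Real.rpow_le_rpow_of_nonpos (by positivity) h1 (by linarith : -t ≤ 0)
      have hinv : (((2:ℝ)^n)⁻¹) ^ (-t) = ((2:ℝ)^n) ^ t := by
        rw [← Real.rpow_neg_one ((2:ℝ)^n), ← Real.rpow_mul (by positivity)]
        norm_num
      calc ‖z - w‖ ^ (-t) ≤ (((2:ℝ)^n)⁻¹) ^ (-t) := hmono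
        _ = ((2:ℝ)^n) ^ t := hinv
    rw [setLIntegral_const] at hb
    have hμ : volume (S n) ≤ ENNReal.ofReal (2 * ((2:ℝ)^n)⁻¹) ^ 2 * NNReal.pi := by
      have hsub : S n ⊆ Metric.closedBall z (2 * ((2:ℝ)^n)⁻¹) := by
        intro w hw
        rw [Metric.mem_closedBall, dist_eq_norm, ← norm_neg]
        simpa [neg_sub] using hw.2
      calc volume (S n) ≤ volume (Metric.closedBall z (2 * ((2:ℝ)^n)⁻¹)) := measure_mono hsub
        _ = ENNReal.ofReal (2 * ((2:ℝ)^n)⁻¹) ^ 2 * NNReal.pi := Complex.volume_closedBall _ _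
    calc ∫⁻ w in S n, ENNReal.ofReal (‖z - w‖ ^ (-t))
        ≤ ENNReal.ofReal (((2:ℝ)^n) ^ t) * volume (S n) := hb
      _ ≤ ENNReal.ofReal (((2:ℝ)^n) ^ t) * (ENNReal.ofReal (2 * ((2:ℝ)^n)⁻¹) ^ 2 * NNReal.pi) := by
          gcongr
      _ = ENNReal.ofReal (4 * Real.pi) * ENNReal.ofReal r ^ n := by
          rw [show ((NNReal.pi : ℝ≥0∞)) = ENNReal.ofReal Real.pi by
            rw [← NNReal.coe_real_pi, ENNReal.ofReal_coe_nnreal]]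
          rw [← ENNReal.ofReal_pow (by positivity), ← ENNReal.ofReal_pow hr0.le]
          rw [← ENNReal.ofReal_mul (by positivity), ← ENNReal.ofReal_mul (by positivity),
            ← ENNReal.ofReal_mul (by positivity)]
          exact congrArg _ (two_rpow_arith n t)
  calc ∫⁻ w in unitD, ENNReal.ofReal (‖z - w‖ ^ (-t))
      ≤ ∫⁻ w in ({z} ∪ ⋃ n, S n), ENNReal.ofReal (‖z - w‖ ^ (-t)) := lintegral_mono_set hcover
    _ ≤ (∫⁻ w in ({z} : Set ℂ), ENNReal.ofReal (‖z - w‖ ^ (-t)))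
        + ∫⁻ w in (⋃ n, S n), ENNReal.ofReal (‖z - w‖ ^ (-t)) := lintegral_union_le _ _ _
    _ ≤ 0 + ∑' n, ∫⁻ w in S n, ENNReal.ofReal (‖z - w‖ ^ (-t)) := by
        gcongr
        · exact le_of_eq (setLIntegral_measure_zero _ _ (measure_singleton z))
        · exact lintegral_iUnion_le _ _
    _ ≤ ∑' n, ENNReal.ofReal (4 * Real.pi) * ENNReal.ofReal r ^ n := by
        rw [zero_add]; exact ENNReal.tsum_le_tsum hann
    _ = ENNReal.ofReal (4 * Real.pi) * (1 - ENNReal.ofReal r)⁻¹ := by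
        rw [ENNReal.tsum_mul_left, ENNReal.tsum_geometric]
    _ ≤ ENNReal.ofReal (32 * Real.pi / (2 - t)) := by
        have haux : (2 - t) / 4 ≤ 1 - r := by
          have h := aux_one_sub (x := 2 - t) (by linarith) (by linarith)
          have : (2:ℝ) ^ (-(2 - t)) = r := by rw [hr]; norm_num
          linarith [this ▸ h]
        have h1r : (1 : ℝ≥0∞) - ENNReal.ofReal r = ENNReal.ofReal (1 - r) := by
          rw [ENNReal.ofReal_sub _ hr0.le, ENNReal.ofReal_one]
        rw [h1r]
        have hstep : (ENNReal.ofReal (1 - r))⁻¹ ≤ ENNReal.ofReal (4 / (2 - t)) := by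
          rw [show (4:ℝ) / (2 - t) = ((2-t)/4)⁻¹ by field_simp]
          rw [← ENNReal.ofReal_inv_of_pos (by linarith)]
          refine ENNReal.ofReal_le_ofReal ?_
          exact inv_anti₀ (by linarith) haux
        calc ENNReal.ofReal (4 * Real.pi) * (ENNReal.ofReal (1 - r))⁻¹
            ≤ ENNReal.ofReal (4 * Real.pi) * ENNReal.ofReal (4 / (2 - t)) := by gcongr
          _ = ENNReal.ofReal (4 * Real.pi * (4 / (2 - t))) := by
              rw [← ENNReal.ofReal_mul (by positivity)]
          _ ≤ ENNReal.ofReal (32 * Real.pi / (2 - t)) := by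
              refine ENNReal.ofReal_le_ofReal ?_
              have he : 4 * Real.pi * (4 / (2 - t)) = 16 * Real.pi / (2 - t) := by ring
              rw [he]
              gcongr
              · linarith

lemma boundLp {p : ℝ} (hp : 2 < p) (f : ℂ → ℂ)
    (hf : MemLp f (ENNReal.ofReal p) (volume.restrict unitD)) {z : ℂ} (hz : z ∈ unitD) :
    Integrable (fun w => kD z w * f w) (volume.restrict unitD) ∧
    ‖∫ w in unitD, kD z w * f w‖ ≤
      64 * ((p - 1) / (p - 2)) * (eLpNorm f (ENNReal.ofReal p) (volume.restrict unitD)).toReal := by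
  have hπ : (0:ℝ) < Real.pi := Real.pi_pos
  set μD := volume.restrict unitD with hμD
  set q : ℝ := p / (p - 1) with hqdef
  have hp1 : (1:ℝ) < p := by linarith
  have hq1 : 1 < q := by rw [hqdef, lt_div_iff₀ (by linarith)]; linarith
  have hq2 : q < 2 := by rw [hqdef, div_lt_iff₀ (by linarith)]; linarith
  have hpq : q.HolderConjugate p := by
    rw [Real.holderConjugate_iff]
    constructor
    · exact hq1
    · rw [hqdef]; field_simp; ring
  set F : ℂ → ℝ≥0∞ := fun w => (‖f w‖₊ : ℝ≥0∞) with hFdef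
  set G : ℂ → ℝ≥0∞ := fun w => ENNReal.ofReal (‖z - w‖ ^ (-1:ℝ)) with hGdef
  have hGmeas : Measurable G := by rw [hGdef]; fun_prop
  have hFmeas : AEMeasurable F μD := hf.1.enorm
  have hDmeas : MeasurableSet unitD := measurableSet_ball
  have haesm : AEStronglyMeasurable (fun w => kD z w * f w) μD :=
    (kD_measurable z).aestronglyMeasurable.mul hf.1
  have hpt : ∀ᵐ w ∂μD, (‖kD z w * f w‖₊ : ℝ≥0∞) ≤ ENNReal.ofReal (2/Real.pi) * (G w * F w) := by
    filter_upwards [ae_restrict_mem hDmeas] with w hw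
    rw [nnnorm_mul, ENNReal.coe_mul, ← mul_assoc]
    gcongr
    rw [← enorm_eq_nnnorm, ← ofReal_norm, hGdef, ← ENNReal.ofReal_mul (by positivity)]
    exact ENNReal.ofReal_le_ofReal (kD_norm_le hz hw)
  have hA : ∫⁻ w, ‖kD z w * f w‖₊ ∂μD ≤
      ENNReal.ofReal (2/Real.pi) * ∫⁻ w, G w * F w ∂μD := by
    rw [← lintegral_const_mul' _ _ ENNReal.ofReal_ne_top]
    exact lintegral_mono_ae hpt
  have hH : ∫⁻ w, G w * F w ∂μD ≤
      (∫⁻ w, G w ^ q ∂μD) ^ (1/q) * (∫⁻ w, F w ^ p ∂μD) ^ (1/p) := by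
    have h := ENNReal.lintegral_mul_le_Lp_mul_Lq μD hpq hGmeas.aemeasurable hFmeas
    simpa [Pi.mul_apply] using h
  have hGq : ∫⁻ w, G w ^ q ∂μD ≤ ENNReal.ofReal (32 * Real.pi / (2 - q)) := by
    have heq : ∀ w : ℂ, G w ^ q = ENNReal.ofReal (‖z - w‖ ^ (-q)) := by
      intro w
      rw [hGdef, ENNReal.ofReal_rpow_of_nonneg (by positivity) (by linarith)]
      congr 1
      rw [← Real.rpow_mul (norm_nonneg _)]
      norm_num
    calc ∫⁻ w, G w ^ q ∂μD = ∫⁻ w, ENNReal.ofReal (‖z - w‖ ^ (-q)) ∂μD :=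
          lintegral_congr heq
      _ ≤ _ := key_lintegral hz hq1.le hq2
  have hone : (1:ℝ≥0∞) ≤ ENNReal.ofReal (32 * Real.pi / (2 - q)) := by
    rw [ENNReal.one_le_ofReal, le_div_iff₀ (by linarith)]
    nlinarith [Real.pi_gt_three]
  have hGq' : (∫⁻ w, G w ^ q ∂μD) ^ (1/q) ≤ ENNReal.ofReal (32 * Real.pi / (2 - q)) := by
    calc (∫⁻ w, G w ^ q ∂μD) ^ (1/q)
        ≤ ENNReal.ofReal (32 * Real.pi / (2 - q)) ^ (1/q) :=
          ENNReal.rpow_le_rpow hGq (by positivity)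
      _ ≤ ENNReal.ofReal (32 * Real.pi / (2 - q)) ^ (1:ℝ) := by
          apply ENNReal.rpow_le_rpow_of_exponent_le hone
          rw [div_le_one (by linarith)]
          linarith
      _ = _ := ENNReal.rpow_one _
  set N := eLpNorm f (ENNReal.ofReal p) μD with hNdef
  have hsn : (∫⁻ w, F w ^ p ∂μD) ^ (1/p) = N := by
    rw [hNdef, eLpNorm_eq_lintegral_rpow_enorm_toReal
      (by simp only [ne_eq, ENNReal.ofReal_eq_zero, not_le]; linarith) ENNReal.ofReal_ne_top,
      ENNReal.toReal_ofReal (by linarith)]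
    rfl
  have hNfin : N < ⊤ := hf.2
  have hmain : ∫⁻ w, ‖kD z w * f w‖₊ ∂μD ≤
      ENNReal.ofReal (2/Real.pi) * (ENNReal.ofReal (32 * Real.pi / (2 - q)) * N) := by
    calc ∫⁻ w, ‖kD z w * f w‖₊ ∂μD
        ≤ ENNReal.ofReal (2/Real.pi) * ∫⁻ w, G w * F w ∂μD := hA
      _ ≤ ENNReal.ofReal (2/Real.pi) *
          ((∫⁻ w, G w ^ q ∂μD) ^ (1/q) * (∫⁻ w, F w ^ p ∂μD) ^ (1/p)) := by gcongr
      _ ≤ ENNReal.ofReal (2/Real.pi) * (ENNReal.ofReal (32 * Real.pi / (2 - q)) * N) := by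
          rw [hsn]
          gcongr
  have hRfin : ENNReal.ofReal (2/Real.pi) * (ENNReal.ofReal (32 * Real.pi / (2 - q)) * N) < ⊤ :=
    ENNReal.mul_lt_top ENNReal.ofReal_lt_top (ENNReal.mul_lt_top ENNReal.ofReal_lt_top hNfin)
  have hint : Integrable (fun w => kD z w * f w) μD :=
    ⟨haesm, lt_of_le_of_lt hmain hRfin⟩
  refine ⟨hint, ?_⟩
  have h1 : ‖∫ w in unitD, kD z w * f w‖ ≤ ∫ w, ‖kD z w * f w‖ ∂μD := by
    exact norm_integral_le_integral_norm _
  have h2 : ∫ w, ‖kD z w * f w‖ ∂μD = (∫⁻ w, ‖kD z w * f w‖₊ ∂μD).toReal :=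
    integral_norm_eq_lintegral_enorm haesm
  have h3 : (∫⁻ w, ‖kD z w * f w‖₊ ∂μD).toReal ≤
      (ENNReal.ofReal (2/Real.pi) * (ENNReal.ofReal (32 * Real.pi / (2 - q)) * N)).toReal :=
    ENNReal.toReal_mono hRfin.ne hmain
  have h4 : (ENNReal.ofReal (2/Real.pi) * (ENNReal.ofReal (32 * Real.pi / (2 - q)) * N)).toReal
      = (2/Real.pi) * ((32 * Real.pi / (2 - q)) * N.toReal) := by
    rw [ENNReal.toReal_mul, ENNReal.toReal_mul, ENNReal.toReal_ofReal (by positivity),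
      ENNReal.toReal_ofReal (by
        have h2q : (0:ℝ) < 2 - q := by linarith
        positivity)]
  have h5 : (2/Real.pi) * ((32 * Real.pi / (2 - q)) * N.toReal)
      = 64 * ((p - 1) / (p - 2)) * N.toReal := by
    have hd1 : p - 2 ≠ 0 := by linarith
    have hd2 : p - 1 ≠ 0 := by linarith
    have hπ0 : Real.pi ≠ 0 := hπ.ne'
    have hq2' : 2 - q = (p - 2) / (p - 1) := by
      rw [hqdef]; field_simp; ring
    rw [hq2', div_div_eq_mul_div]
    field_simp
    ring
  linarith [h1, h2.le, h3, h4.le, h5.le]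

lemma boundLinf (f : ℂ → ℂ) (hf : MemLp f ⊤ (volume.restrict unitD)) {z : ℂ}
    (hz : z ∈ unitD) :
    Integrable (fun w => kD z w * f w) (volume.restrict unitD) ∧
    ‖∫ w in unitD, kD z w * f w‖ ≤
      64 * (eLpNorm f ⊤ (volume.restrict unitD)).toReal := by
  have hπ : (0:ℝ) < Real.pi := Real.pi_pos
  set μD := volume.restrict unitD with hμD
  set G : ℂ → ℝ≥0∞ := fun w => ENNReal.ofReal (‖z - w‖ ^ (-1:ℝ)) with hGdef
  set M := eLpNormEssSup f μD with hMdef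
  have hMfin : M < ⊤ := by
    have h := hf.2
    rwa [eLpNorm_exponent_top] at h
  have hDmeas : MeasurableSet unitD := measurableSet_ball
  have haesm : AEStronglyMeasurable (fun w => kD z w * f w) μD :=
    (kD_measurable z).aestronglyMeasurable.mul hf.1
  have hpt : ∀ᵐ w ∂μD, (‖kD z w * f w‖₊ : ℝ≥0∞) ≤
      ENNReal.ofReal (2/Real.pi) * (G w * (‖f w‖₊ : ℝ≥0∞)) := by
    filter_upwards [ae_restrict_mem hDmeas] with w hw
    rw [nnnorm_mul, ENNReal.coe_mul, ← mul_assoc]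
    gcongr
    rw [← enorm_eq_nnnorm, ← ofReal_norm, hGdef, ← ENNReal.ofReal_mul (by positivity)]
    exact ENNReal.ofReal_le_ofReal (kD_norm_le hz hw)
  have hB : ∫⁻ w, G w * (‖f w‖₊ : ℝ≥0∞) ∂μD ≤ (∫⁻ w, G w ∂μD) * M := by
    calc ∫⁻ w, G w * (‖f w‖₊ : ℝ≥0∞) ∂μD ≤ ∫⁻ w, G w * M ∂μD := by
          refine lintegral_mono_ae ?_
          filter_upwards [ae_le_eLpNormEssSup (f := f) (μ := μD)] with w hw
          exact mul_le_mul_right hw _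
      _ = (∫⁻ w, G w ∂μD) * M := lintegral_mul_const' M G hMfin.ne
  have hG1 : ∫⁻ w, G w ∂μD ≤ ENNReal.ofReal (32 * Real.pi) := by
    have h := key_lintegral hz (le_refl (1:ℝ)) one_lt_two
    norm_num at h
    rw [ENNReal.ofReal_mul (by norm_num)]; simpa using h
  have hmain : ∫⁻ w, ‖kD z w * f w‖₊ ∂μD ≤
      ENNReal.ofReal (2/Real.pi) * (ENNReal.ofReal (32 * Real.pi) * M) := by
    calc ∫⁻ w, ‖kD z w * f w‖₊ ∂μD
        ≤ ENNReal.ofReal (2/Real.pi) * ∫⁻ w, G w * (‖f w‖₊ : ℝ≥0∞) ∂μD := by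
          rw [← lintegral_const_mul' _ _ ENNReal.ofReal_ne_top]
          exact lintegral_mono_ae hpt
      _ ≤ ENNReal.ofReal (2/Real.pi) * ((∫⁻ w, G w ∂μD) * M) := by gcongr
      _ ≤ ENNReal.ofReal (2/Real.pi) * (ENNReal.ofReal (32 * Real.pi) * M) := by gcongr
  have hRfin : ENNReal.ofReal (2/Real.pi) * (ENNReal.ofReal (32 * Real.pi) * M) < ⊤ :=
    ENNReal.mul_lt_top ENNReal.ofReal_lt_top (ENNReal.mul_lt_top ENNReal.ofReal_lt_top hMfin)
  have hint : Integrable (fun w => kD z w * f w) μD := ⟨haesm, lt_of_le_of_lt hmain hRfin⟩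
  refine ⟨hint, ?_⟩
  have h1 : ‖∫ w in unitD, kD z w * f w‖ ≤ ∫ w, ‖kD z w * f w‖ ∂μD := by
    exact norm_integral_le_integral_norm _
  have h2 : ∫ w, ‖kD z w * f w‖ ∂μD = (∫⁻ w, ‖kD z w * f w‖₊ ∂μD).toReal :=
    integral_norm_eq_lintegral_enorm haesm
  have h3 : (∫⁻ w, ‖kD z w * f w‖₊ ∂μD).toReal ≤
      (ENNReal.ofReal (2/Real.pi) * (ENNReal.ofReal (32 * Real.pi) * M)).toReal :=
    ENNReal.toReal_mono hRfin.ne hmain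
  have h4 : (ENNReal.ofReal (2/Real.pi) * (ENNReal.ofReal (32 * Real.pi) * M)).toReal
      = (2/Real.pi) * ((32 * Real.pi) * M.toReal) := by
    rw [ENNReal.toReal_mul, ENNReal.toReal_mul, ENNReal.toReal_ofReal (by positivity),
      ENNReal.toReal_ofReal (by positivity)]
  have h5 : (2/Real.pi) * ((32 * Real.pi) * M.toReal) = 64 * M.toReal := by
    field_simp
    ring
  have h6 : eLpNorm f ⊤ μD = M := eLpNorm_exponent_top
  rw [h6]
  linarith [h1, h2.le, h3, h4.le, h5.le]


/-- **Proposition 3.1(iii) on the unit disc.** There is an absolute constant `C` such that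
`sup_D |T f| ≤ C (p-1)/(p-2) ‖f‖_{L^p(D)}` for `2 < p < ∞`, and `sup_D |T f| ≤ C ‖f‖_{L^∞(D)}`. -/
theorem T_sup_norm_bound :
    ∃ C : ℝ, 0 < C ∧
      (∀ p : ℝ, 2 < p →
        ∀ f : ℂ → ℂ, MemLp f (ENNReal.ofReal p) (volume.restrict unitD) →
          (∀ z ∈ unitD, Integrable (fun w => kD z w * f w) (volume.restrict unitD)) ∧
          (∀ z ∈ unitD, ‖∫ w in unitD, kD z w * f w‖ ≤
            C * ((p - 1) / (p - 2)) *
              (eLpNorm f (ENNReal.ofReal p) (volume.restrict unitD)).toReal)) ∧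
      (∀ f : ℂ → ℂ, MemLp f ⊤ (volume.restrict unitD) →
        (∀ z ∈ unitD, Integrable (fun w => kD z w * f w) (volume.restrict unitD)) ∧
        (∀ z ∈ unitD, ‖∫ w in unitD, kD z w * f w‖ ≤
          C * (eLpNorm f ⊤ (volume.restrict unitD)).toReal)) := by
  refine ⟨64, by norm_num, ?_, ?_⟩
  · intro p hp f hf
    exact ⟨fun z hz => (boundLp hp f hf hz).1, fun z hz => (boundLp hp f hf hz).2⟩
  · intro f hf
    exact ⟨fun z hz => (boundLinf f hf hz).1, fun z hz => (boundLinf f hf hz).2⟩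

end
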